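/- For integers n ≥ 3 and m ≥ 1, the residue at z = 1 of the meromorphic 1-form dz/(z^n − 1)^{2(m+1)} is nonzero. Hence ∮_τ Q_{n,m}/dg_{n,m} ≠ 0 where g_{n,m}(z) = z^{n(m+1)−1}, Q_{n,m} = z^{n(m+1)−2}/(z^n−1)^{2(m+1)} dz², and τ is a small loop around z = 1. -/

import Mathlib

open Complex Metric Finset

lemma residue_aux (n : ℕ) (hn : 3 ≤ n) :
    ∃ ε > (0 : ℝ), ∀ k : ℕ, 1 ≤ k → ∀ δ : ℝ, 0 < δ → δ < ε →
      circleIntegral (fun z : ℂ => ((z ^ n - 1) ^ k)⁻¹) 1 δ ≠ 0 := by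
  set p : ℂ → ℂ := fun z => ∑ i ∈ Finset.range n, z ^ i with hp
  have hp1 : p 1 = (n : ℂ) := by simp [hp]
  have hpn0 : (n : ℂ) ≠ 0 := by exact_mod_cast (by omega : n ≠ 0)
  have hpc : Continuous p := by
    simp only [hp]; exact continuous_finset_sum _ fun i _ => continuous_pow i
  obtain ⟨ε₀, hε₀, hball⟩ : ∃ ε > (0:ℝ), ∀ z ∈ ball (1:ℂ) ε, p z ≠ 0 := by
    have h := (hpc.continuousAt (x := (1:ℂ))).eventually_ne (hp1 ▸ hpn0)
    rw [Metric.eventually_nhds_iff_ball] at h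
    exact h
  refine ⟨min ε₀ (1/2), lt_min hε₀ (by norm_num), ?_⟩
  intro k hk δ hδ0 hδ
  have hδε₀ : δ < ε₀ := lt_of_lt_of_le hδ (min_le_left _ _)
  have hδh : δ < 1/2 := lt_of_lt_of_le hδ (min_le_right _ _)
  -- basic facts on the closed ball / sphere
  have hz0 : ∀ z ∈ closedBall (1:ℂ) δ, z ≠ 0 := by
    intro z hz h0
    rw [mem_closedBall, h0] at hz
    have h1 : dist (0:ℂ) 1 = 1 := by simp [Complex.dist_eq]
    rw [h1] at hz
    linarith
  have hpz : ∀ z ∈ closedBall (1:ℂ) δ, p z ≠ 0 := by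
    intro z hz
    exact hball z (mem_ball.2 (lt_of_le_of_lt (mem_closedBall.1 hz) hδε₀))
  have hfac : ∀ z : ℂ, z ^ n - 1 = (z - 1) * p z := by
    intro z; rw [hp, mul_comm, geom_sum_mul]
  have hne1 : ∀ z ∈ sphere (1:ℂ) δ, z - 1 ≠ 0 := by
    intro z hz h
    rw [sub_eq_zero] at h
    rw [mem_sphere, h] at hz
    simp at hz
    linarith
  have hw : ∀ z ∈ sphere (1:ℂ) δ, z ^ n - 1 ≠ 0 := by
    intro z hz
    rw [hfac]
    exact mul_ne_zero (hne1 z hz) (hpz z (sphere_subset_closedBall hz))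
  -- continuity / integrability helper
  have hcont : ∀ (c : ℤ) (l : ℕ),
      ContinuousOn (fun z : ℂ => z ^ c * ((z ^ n - 1) ^ l)⁻¹) (sphere (1:ℂ) δ) := by
    intro c l
    refine ContinuousOn.mul ?_ ?_
    · exact continuousOn_id.zpow₀ c fun z hz =>
        Or.inl (hz0 z (sphere_subset_closedBall hz))
    · exact (((continuous_pow n).sub continuous_const).continuousOn.pow l).inv₀
        fun z hz => pow_ne_zero _ (hw z hz)
  -- main claim by induction on the order of the pole
  have claim : ∀ l : ℕ, 1 ≤ l → ∀ b : ℤ, b ≤ 0 →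
      circleIntegral (fun z : ℂ => z ^ b * ((z ^ n - 1) ^ l)⁻¹) 1 δ ≠ 0 := by
    intro l hl
    induction l, hl using Nat.le_induction with
    | base =>
      intro b _
      have hg : DifferentiableOn ℂ (fun z : ℂ => z ^ b * (p z)⁻¹) (closedBall (1:ℂ) δ) := by
        intro z hz
        refine DifferentiableAt.differentiableWithinAt ?_
        refine DifferentiableAt.mul ?_ ?_
        · exact differentiableAt_zpow.2 (Or.inl (hz0 z hz))
        · refine DifferentiableAt.inv ?_ (hpz z hz)
          simp only [hp]
          exact DifferentiableAt.fun_sum fun i _ => differentiableAt_pow i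
      have hcauchy := hg.circleIntegral_sub_inv_smul (mem_ball_self hδ0)
      have hcongr : circleIntegral (fun z : ℂ => z ^ b * ((z ^ n - 1) ^ 1)⁻¹) 1 δ
          = ∮ z in C(1, δ), (z - 1)⁻¹ • (z ^ b * (p z)⁻¹) := by
        refine circleIntegral.integral_congr hδ0.le fun z hz => ?_
        rw [pow_one, hfac z, smul_eq_mul, mul_inv]
        ring
      rw [hcongr, hcauchy]
      simp only [smul_eq_mul, one_zpow, hp1, one_mul]
      exact mul_ne_zero two_pi_I_ne_zero (inv_ne_zero hpn0)
    | succ l hl IH =>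
      intro b hb
      set a : ℤ := b - n + 1 with ha
      have hn3 : (3:ℤ) ≤ (n:ℤ) := by exact_mod_cast hn
      have haneg : a ≠ 0 := by omega
      have hderiv : ∀ z ∈ sphere (1:ℂ) δ,
          HasDerivAt (fun z : ℂ => z ^ a * (z ^ n - 1) ^ (-(l:ℤ)))
            ((a : ℂ) * (z ^ (b - (n:ℤ)) * ((z ^ n - 1) ^ l)⁻¹)
              - ((n : ℂ) * l) * (z ^ b * ((z ^ n - 1) ^ (l + 1))⁻¹)) z := by
        intro z hz
        have hz0' : z ≠ 0 := hz0 z (sphere_subset_closedBall hz)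
        have hw' : z ^ n - 1 ≠ 0 := hw z hz
        have h1 : HasDerivAt (fun z : ℂ => z ^ a) ((a : ℂ) * z ^ (a - 1)) z :=
          hasDerivAt_zpow a z (Or.inl hz0')
        have h2 : HasDerivAt (fun z : ℂ => z ^ n - 1) ((n : ℂ) * z ^ (n - 1)) z := by
          simpa using (hasDerivAt_pow n z).sub_const 1
        have h3 : HasDerivAt (fun w : ℂ => w ^ (-(l:ℤ)))
            ((Int.cast (-(l:ℤ)) : ℂ) * (z ^ n - 1) ^ (-(l:ℤ) - 1)) (z ^ n - 1) :=
          hasDerivAt_zpow _ _ (Or.inl hw')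
        have h5 : HasDerivAt (fun z : ℂ => z ^ a * (z ^ n - 1) ^ (-(l:ℤ)))
            ((a : ℂ) * z ^ (a - 1) * (z ^ n - 1) ^ (-(l:ℤ))
              + z ^ a * (((Int.cast (-(l:ℤ)) : ℂ) * (z ^ n - 1) ^ (-(l:ℤ) - 1)) * ((n : ℂ) * z ^ (n - 1)))) z :=
          h1.mul (by have h4 := h3.comp z h2; exact h4)
        have e1 : ((z ^ n - 1) ^ l)⁻¹ = (z ^ n - 1) ^ (-(l:ℤ)) := by
          rw [zpow_neg, zpow_natCast]
        have e2 : ((z ^ n - 1) ^ (l + 1))⁻¹ = (z ^ n - 1) ^ (-(l:ℤ) - 1) := by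
          rw [show (-(l:ℤ) - 1) = -((l+1 : ℕ) : ℤ) by push_cast; ring, zpow_neg, zpow_natCast]
        have e3 : z ^ (a - 1) = z ^ (b - (n:ℤ)) := by congr 1; omega
        have e4 : (z : ℂ) ^ (n - 1 : ℕ) = z ^ ((n : ℤ) - 1) := by
          rw [← zpow_natCast]
          congr 1
          omega
        have e5 : z ^ a * z ^ ((n:ℤ) - 1) = z ^ b := by
          rw [← zpow_add₀ hz0']
          congr 1
          omega
        have key : z ^ a * (((Int.cast (-(l:ℤ)) : ℂ) * (z ^ n - 1) ^ (-(l:ℤ) - 1)) * ((n : ℂ) * z ^ ((n:ℤ) - 1)))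
            = -(((n : ℂ) * l) * (z ^ b * (z ^ n - 1) ^ (-(l:ℤ) - 1))) := by
          rw [← e5]
          push_cast
          ring
        have heq : (a : ℂ) * (z ^ (b - (n:ℤ)) * ((z ^ n - 1) ^ l)⁻¹)
              - ((n : ℂ) * l) * (z ^ b * ((z ^ n - 1) ^ (l + 1))⁻¹)
            = (a : ℂ) * z ^ (a - 1) * (z ^ n - 1) ^ (-(l:ℤ))
              + z ^ a * (((Int.cast (-(l:ℤ)) : ℂ) * (z ^ n - 1) ^ (-(l:ℤ) - 1)) * ((n : ℂ) * z ^ (n - 1))) := by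
          rw [e1, e2, e3, e4, key]
          ring
        rw [heq]
        exact h5
      have hzero : (∮ z in C(1, δ),
          ((a : ℂ) * (z ^ (b - (n:ℤ)) * ((z ^ n - 1) ^ l)⁻¹)
            - ((n : ℂ) * l) * (z ^ b * ((z ^ n - 1) ^ (l + 1))⁻¹))) = 0 :=
        circleIntegral.integral_eq_zero_of_hasDerivWithinAt hδ0.le
          (fun z hz => (hderiv z hz).hasDerivWithinAt)
      have hi1 : CircleIntegrable
          (fun z : ℂ => (a : ℂ) * (z ^ (b - (n:ℤ)) * ((z ^ n - 1) ^ l)⁻¹)) 1 δ :=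
        (continuousOn_const.mul (hcont (b - (n:ℤ)) l)).circleIntegrable hδ0.le
      have hi2 : CircleIntegrable
          (fun z : ℂ => ((n : ℂ) * l) * (z ^ b * ((z ^ n - 1) ^ (l + 1))⁻¹)) 1 δ :=
        (continuousOn_const.mul (hcont b (l + 1))).circleIntegrable hδ0.le
      rw [circleIntegral.integral_sub hi1 hi2, circleIntegral.integral_const_mul,
        circleIntegral.integral_const_mul, sub_eq_zero] at hzero
      intro hJ
      rw [hJ, mul_zero] at hzero
      have hIH := IH (b - (n:ℤ)) (by omega)
      rcases mul_eq_zero.1 hzero with h | h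
      · exact haneg (by exact_mod_cast h)
      · exact hIH h
  -- conclude
  have h0 := claim k hk 0 le_rfl
  have heq : (fun z : ℂ => z ^ (0:ℤ) * ((z ^ n - 1) ^ k)⁻¹)
      = fun z : ℂ => ((z ^ n - 1) ^ k)⁻¹ := by
    funext z; simp
  rwa [heq] at h0

theorem stmt_13 (n m : ℕ) (hn : 3 ≤ n) (hm : 1 ≤ m) :
    (∃ ε > (0 : ℝ), ∀ δ : ℝ, 0 < δ → δ < ε →
      circleIntegral (fun z : ℂ => ((z ^ n - 1) ^ (2 * (m + 1)))⁻¹) 1 δ ≠ 0) ∧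
    (∃ ε > (0 : ℝ), ∀ δ : ℝ, 0 < δ → δ < ε →
      circleIntegral
        (fun z : ℂ => (((n * (m + 1) : ℕ) : ℂ) - 1)⁻¹ *
          ((z ^ n - 1) ^ (2 * (m + 1)))⁻¹) 1 δ ≠ 0) := by
  obtain ⟨ε, hε, hmain⟩ := residue_aux n hn
  have hk : 1 ≤ 2 * (m + 1) := by omega
  constructor
  · exact ⟨ε, hε, fun δ h1 h2 => hmain _ hk δ h1 h2⟩
  · refine ⟨ε, hε, fun δ h1 h2 => ?_⟩
    rw [circleIntegral.integral_const_mul]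
    refine mul_ne_zero (inv_ne_zero ?_) (hmain _ hk δ h1 h2)
    rw [sub_ne_zero]
    intro h
    have h1' : ((n * (m + 1) : ℕ) : ℂ) = ((1 : ℕ) : ℂ) := by simpa using h
    have h2' : n * (m + 1) = 1 := Nat.cast_injective h1'
    nlinarith
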